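/- Suppose s_i[0], x^k_i[0], r_i[0] ∈ [0,1] and s_i[0] + ∑_{k=1}^m x^k_i[0] + r_i[0] = 1 for all i, k. Fix a virus index k ∈ {1,…,m}, let M^k = I − hΓ^k + hB^k, and let P^k be any diagonal positive definite n×n matrix. Then along trajectories of the model, for every t ∈ ℤ_{≥0}: (x^k[t+1])ᵀ P^k x^k[t+1] − (x^k[t])ᵀ P^k x^k[t] ≤ (x^k[t])ᵀ ((M^k)ᵀ P^k M^k − P^k) x^k[t]. -/

import Mathlib

open Matrix

/-- Along trajectories of the networked multi-virus SIR model, for any diagonal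
positive definite `P^k`, the decrement of the quadratic Lyapunov function
`V = (x^k)ᵀ P^k x^k` satisfies `ΔV ≤ (x^k)ᵀ((M^k)ᵀ P^k M^k - P^k)x^k`. -/
theorem multiVirusSIR_lyapunov_decrement
    (n m : ℕ) (hn : 0 < n) (hm : 0 < m) (h : ℝ) (hh : 0 < h)
    (β : Fin m → Fin n → Fin n → ℝ) (γ : Fin m → Fin n → ℝ)
    (hβ : ∀ k i j, 0 ≤ β k i j) (hγ : ∀ k i, 0 < γ k i)
    (hβsum : ∀ i, h * (∑ k, ∑ j, β k i j) ≤ 1)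
    (hγsum : ∀ i, h * (∑ k, γ k i) ≤ 1)
    (s : ℕ → Fin n → ℝ) (x : ℕ → Fin m → Fin n → ℝ) (r : ℕ → Fin n → ℝ)
    (hs : ∀ t i, s (t + 1) i = s t i - h * (s t i * ∑ k, ∑ j, β k i j * x t k j))
    (hx : ∀ t k i, x (t + 1) k i
      = x t k i + h * (s t i * (∑ j, β k i j * x t k j) - γ k i * x t k i))
    (hr : ∀ t i, r (t + 1) i = r t i + h * ∑ k, γ k i * x t k i)
    (hinit : ∀ i, s 0 i ∈ Set.Icc (0 : ℝ) 1 ∧ (∀ k, x 0 k i ∈ Set.Icc (0 : ℝ) 1) ∧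
      r 0 i ∈ Set.Icc (0 : ℝ) 1 ∧ s 0 i + (∑ k, x 0 k i) + r 0 i = 1)
    (k : Fin m)
    (M : Matrix (Fin n) (Fin n) ℝ)
    (hM : M = 1 - h • Matrix.diagonal (γ k) + h • Matrix.of (β k))
    (P : Matrix (Fin n) (Fin n) ℝ) (hPdiag : P.IsDiag) (hP : P.PosDef) :
    ∀ t : ℕ,
      ((fun i => x (t + 1) k i) ⬝ᵥ (P *ᵥ fun i => x (t + 1) k i))
        - ((fun i => x t k i) ⬝ᵥ (P *ᵥ fun i => x t k i))
      ≤ (fun i => x t k i) ⬝ᵥ ((Mᵀ * P * M - P) *ᵥ fun i => x t k i) := by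
  -- each individual healing rate satisfies h * γ ≤ 1
  have hγle : ∀ (k' : Fin m) (i : Fin n), h * γ k' i ≤ 1 := fun k' i =>
    le_trans (mul_le_mul_of_nonneg_left
      (Finset.single_le_sum (fun j _ => (hγ j i).le) (Finset.mem_univ k')) hh.le) (hγsum i)
  -- the invariant: nonnegativity and conservation of total mass
  have inv : ∀ t i, 0 ≤ s t i ∧ 0 ≤ r t i ∧ (∀ k', 0 ≤ x t k' i) ∧
      s t i + (∑ k', x t k' i) + r t i = 1 := by
    intro t
    induction t with
    | zero =>
      intro i
      obtain ⟨hs0, hx0, hr0, hsum0⟩ := hinit i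
      exact ⟨hs0.1, hr0.1, fun k' => (hx0 k').1, hsum0⟩
    | succ t ih =>
      have hsnn : ∀ i, 0 ≤ s t i := fun i => (ih i).1
      have hxnn : ∀ (k' : Fin m) (j : Fin n), 0 ≤ x t k' j := fun k' j => (ih j).2.2.1 k'
      have hxle1 : ∀ (k' : Fin m) (j : Fin n), x t k' j ≤ 1 := by
        intro k' j
        obtain ⟨hs1, hr1, hx1, hsum1⟩ := ih j
        have := Finset.single_le_sum (fun l (_ : l ∈ Finset.univ) => hx1 l) (Finset.mem_univ k')
        linarith
      intro i
      obtain ⟨hs1, hr1, hx1, hsum1⟩ := ih i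
      have hB : ∀ k' : Fin m, 0 ≤ ∑ j, β k' i j * x t k' j := fun k' =>
        Finset.sum_nonneg fun j _ => mul_nonneg (hβ k' i j) (hxnn k' j)
      have hA : 0 ≤ ∑ k', ∑ j, β k' i j * x t k' j :=
        Finset.sum_nonneg fun k' _ => hB k'
      have hAle : (∑ k', ∑ j, β k' i j * x t k' j) ≤ ∑ k', ∑ j, β k' i j := by
        refine Finset.sum_le_sum fun k' _ => Finset.sum_le_sum fun j _ => ?_
        nlinarith [hβ k' i j, hxnn k' j, hxle1 k' j]
      have hhA : h * (∑ k', ∑ j, β k' i j * x t k' j) ≤ 1 :=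
        le_trans (mul_le_mul_of_nonneg_left hAle hh.le) (hβsum i)
      refine ⟨?_, ?_, ?_, ?_⟩
      · rw [hs t i]
        nlinarith [mul_nonneg hs1 (sub_nonneg.2 hhA)]
      · rw [hr t i]
        have : 0 ≤ ∑ k', γ k' i * x t k' i :=
          Finset.sum_nonneg fun k' _ => mul_nonneg (hγ k' i).le (hx1 k')
        nlinarith
      · intro k'
        rw [hx t k' i]
        nlinarith [mul_nonneg (hx1 k') (sub_nonneg.2 (hγle k' i)),
          mul_nonneg (mul_nonneg hh.le hs1) (hB k')]
      · have e1 : ∑ k', x (t+1) k' i = (∑ k', x t k' i)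
            + h * (s t i * (∑ k', ∑ j, β k' i j * x t k' j) - ∑ k', γ k' i * x t k' i) := by
          rw [Finset.sum_congr rfl (fun k' _ => hx t k' i), Finset.sum_add_distrib,
            ← Finset.mul_sum, Finset.sum_sub_distrib, ← Finset.mul_sum]
        rw [hs t i, hr t i, e1]; linarith
  intro t
  set y : Fin n → ℝ := fun i => x t k i with hy
  set y' : Fin n → ℝ := fun i => x (t + 1) k i with hy'
  -- entries of M *ᵥ y
  have hz : ∀ i, (M *ᵥ y) i = y i + h * ((∑ j, β k i j * y j) - γ k i * y i) := by
    intro i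
    rw [hM]
    simp only [mulVec, dotProduct, Matrix.add_apply, Matrix.sub_apply, Matrix.smul_apply,
      Matrix.one_apply, Matrix.diagonal_apply, Matrix.of_apply, smul_eq_mul]
    simp only [sub_mul, add_mul, ite_mul, one_mul, zero_mul, mul_ite, mul_zero,
      Finset.sum_add_distrib, Finset.sum_sub_distrib, Finset.sum_ite_eq, Finset.mem_univ, if_true,
      Finset.mul_sum]
    ring_nf
    rw [Finset.mul_sum]
    ring_nf
  -- componentwise bounds 0 ≤ y' ≤ M *ᵥ y
  have hynn : ∀ i, 0 ≤ y' i := fun i => (inv (t + 1) i).2.2.1 k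
  have hyle : ∀ i, y' i ≤ (M *ᵥ y) i := by
    intro i
    rw [hz i, hy']
    simp only [hx t k i]
    have hBi : 0 ≤ ∑ j, β k i j * y j :=
      Finset.sum_nonneg fun j _ => mul_nonneg (hβ k i j) ((inv t j).2.2.1 k)
    have hsle1 : s t i ≤ 1 := by
      obtain ⟨hs1, hr1, hx1, hsum1⟩ := inv t i
      have : 0 ≤ ∑ k', x t k' i := Finset.sum_nonneg fun k' _ => hx1 k'
      linarith
    have hsnn : 0 ≤ s t i := (inv t i).1
    have hyy : y = fun j => x t k j := rfl
    rw [hyy]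
    nlinarith [mul_nonneg (mul_nonneg hh.le (sub_nonneg.2 hsle1)) hBi]
  -- quadratic form of a diagonal matrix
  have hPapp : ∀ v : Fin n → ℝ, v ⬝ᵥ (P *ᵥ v) = ∑ i, P i i * v i * v i := by
    intro v
    simp only [dotProduct, mulVec]
    refine Finset.sum_congr rfl (fun i _ => ?_)
    rw [show ∑ j, P i j * v j = P i i * v i from
      Finset.sum_eq_single i (fun j _ hj => by rw [hPdiag (Ne.symm hj), zero_mul])
        (fun hi => absurd (Finset.mem_univ i) hi)]
    ring
  have hPpos : ∀ i, 0 < P i i := by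
    intro i
    have := hP.dotProduct_mulVec_pos (x := Pi.single i 1) (by simp [Function.ne_iff])
    simpa [dotProduct, mulVec, Pi.single_apply] using this
  -- main comparison
  have hmain : y' ⬝ᵥ (P *ᵥ y') ≤ (M *ᵥ y) ⬝ᵥ (P *ᵥ (M *ᵥ y)) := by
    rw [hPapp, hPapp]
    refine Finset.sum_le_sum fun i _ => ?_
    have h1 : y' i * y' i ≤ (M *ᵥ y) i * (M *ᵥ y) i :=
      mul_le_mul (hyle i) (hyle i) (hynn i) ((hynn i).trans (hyle i))
    nlinarith [hPpos i, h1]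
  have hquad : y ⬝ᵥ ((Mᵀ * P * M) *ᵥ y) = (M *ᵥ y) ⬝ᵥ (P *ᵥ (M *ᵥ y)) := by
    rw [Matrix.dotProduct_mulVec, ← Matrix.vecMul_vecMul, ← Matrix.vecMul_vecMul,
      Matrix.vecMul_transpose, ← Matrix.dotProduct_mulVec, ← Matrix.dotProduct_mulVec]
  have hrhs : y ⬝ᵥ ((Mᵀ * P * M - P) *ᵥ y)
      = y ⬝ᵥ ((Mᵀ * P * M) *ᵥ y) - y ⬝ᵥ (P *ᵥ y) := by
    rw [Matrix.sub_mulVec, dotProduct_sub]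
  show y' ⬝ᵥ (P *ᵥ y') - y ⬝ᵥ (P *ᵥ y) ≤ y ⬝ᵥ ((Mᵀ * P * M - P) *ᵥ y)
  rw [hrhs, hquad]
  linarith
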